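/- Let H be a gated set of vertices of a median graph G of dimension d, with fibers F(x) for x ∈ H. Two fibers F(x) and F(y) are neighboring (i.e., some edge of G joins a vertex of F(x) to a vertex of F(y)) if and only if x and y are adjacent in G. Moreover, if F(x) and F(y) are neighboring, then the boundary ∂_y F(x) = {x' ∈ F(x) : x' has a neighbor in F(y)} is a gated set that induces a subgraph of dimension at most d − 1 (it contains no induced d-dimensional hypercube). -/

import Mathlib

open SimpleGraph Set

/-- The metric interval `I(u,v)` in a graph `G`. -/
def gInterval {V : Type*} (G : SimpleGraph V) (u v : V) : Set V :=
  {w | G.dist u w + G.dist w v = G.dist u v}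

/-- A median graph: a connected graph in which every triplet of vertices has a
unique median, i.e. a unique vertex in `I(x,y) ∩ I(y,z) ∩ I(z,x)`. -/
def MedianGraph {V : Type*} (G : SimpleGraph V) : Prop :=
  G.Connected ∧ ∀ x y z : V,
    ∃! m : V, m ∈ gInterval G x y ∧ m ∈ gInterval G y z ∧ m ∈ gInterval G z x

/-- `G` contains an induced `d`-dimensional hypercube all of whose vertices lie in `S`. -/
def HasCubeIn {V : Type*} (G : SimpleGraph V) (d : ℕ) (S : Set V) : Prop :=
  ∃ f : Finset (Fin d) → V, Function.Injective f ∧ (∀ A, f A ∈ S) ∧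
    ∀ A B : Finset (Fin d), G.Adj (f A) (f B) ↔ (symmDiff A B).card = 1

/-- `G` contains an induced `d`-dimensional hypercube `Q_d`. -/
def HasInducedCube {V : Type*} (G : SimpleGraph V) (d : ℕ) : Prop :=
  HasCubeIn G d Set.univ

/-- A cube-free (median) graph: no induced 3-dimensional hypercube. -/
def CubeFree {V : Type*} (G : SimpleGraph V) : Prop :=
  ¬ HasInducedCube G 3

/-- `g` is a gate of `v` in the set `S`. -/
def IsGate {V : Type*} (G : SimpleGraph V) (S : Set V) (v g : V) : Prop :=
  g ∈ S ∧ ∀ u ∈ S, G.dist v u = G.dist v g + G.dist g u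

/-- A set of vertices is gated if every vertex has a gate in it. -/
def Gated {V : Type*} (G : SimpleGraph V) (S : Set V) : Prop :=
  ∀ v : V, ∃ g : V, IsGate G S v g

/-- A set of vertices is convex if it contains the interval between any two of its members. -/
def GConvex {V : Type*} (G : SimpleGraph V) (S : Set V) : Prop :=
  ∀ u ∈ S, ∀ v ∈ S, gInterval G u v ⊆ S

/-- The star `St(z)`: the set of vertices lying in some induced hypercube of `G`
containing `z`. -/
def gStar {V : Type*} (G : SimpleGraph V) (z : V) : Set V :=
  {v | ∃ (d : ℕ) (f : Finset (Fin d) → V), Function.Injective f ∧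
      (∀ A B : Finset (Fin d), G.Adj (f A) (f B) ↔ (symmDiff A B).card = 1) ∧
      (∃ A, f A = z) ∧ (∃ A, f A = v)}

/-- The fiber `F(x)` of `x` with respect to a (gated) set `H`: all vertices having `x`
as their gate in `H`. -/
def fiber {V : Type*} (G : SimpleGraph V) (H : Set V) (x : V) : Set V :=
  {v | IsGate G H v x}

/-- Two fibers are neighboring when an edge of `G` joins them. -/
def Neighboring {V : Type*} (G : SimpleGraph V) (H : Set V) (x y : V) : Prop :=
  ∃ a ∈ fiber G H x, ∃ b ∈ fiber G H y, G.Adj a b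

/-- The boundary `∂_y F(x)`: vertices of `F(x)` having a neighbor in `F(y)`. -/
def bdry {V : Type*} (G : SimpleGraph V) (H : Set V) (x y : V) : Set V :=
  {a | a ∈ fiber G H x ∧ ∃ b ∈ fiber G H y, G.Adj a b}

/-- The total boundary `∂*F(x)`: union of the boundaries `∂_y F(x)` over all `y ∈ H`
adjacent to `x`. -/
def totalBdry {V : Type*} (G : SimpleGraph V) (H : Set V) (x : V) : Set V :=
  ⋃ (y : V) (_ : y ∈ H ∧ G.Adj x y), bdry G H x y

/-- The imprint set of `u` on `A`. -/
def imprints {V : Type*} (G : SimpleGraph V) (u : V) (A : Set V) : Set V :=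
  {a ∈ A | gInterval G u a ∩ A = {a}}

/-- The halfspace `W(u,v)` associated with an edge `uv`. -/
def halfspaceW {V : Type*} (G : SimpleGraph V) (u v : V) : Set V :=
  {z | G.dist z u < G.dist z v}

namespace MedAux

variable {V : Type*} {G : SimpleGraph V}

lemma dc (G : SimpleGraph V) (a b : V) : G.dist a b = G.dist b a := SimpleGraph.dist_comm

lemma dist0 (hc : G.Connected) {u v : V} (h : G.dist u v = 0) : u = v :=
  (hc.dist_eq_zero_iff).mp h

lemma adj_dist {u v : V} (h : G.Adj u v) : G.dist u v = 1 :=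
  dist_eq_one_iff_adj.mpr h

lemma tri (hc : G.Connected) (a b c : V) : G.dist a c ≤ G.dist a b + G.dist b c :=
  hc.dist_triangle

lemma med (hG : MedianGraph G) (a b c : V) :
    ∃ m : V, (G.dist a m + G.dist m b = G.dist a b) ∧
      (G.dist b m + G.dist m c = G.dist b c) ∧ (G.dist c m + G.dist m a = G.dist c a) := by
  obtain ⟨m, hm, -⟩ := hG.2 a b c
  exact ⟨m, hm.1, hm.2.1, hm.2.2⟩

lemma med_unique (hG : MedianGraph G) {a b c m m' : V}
    (h1 : G.dist a m + G.dist m b = G.dist a b)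
    (h2 : G.dist b m + G.dist m c = G.dist b c)
    (h3 : G.dist c m + G.dist m a = G.dist c a)
    (h1' : G.dist a m' + G.dist m' b = G.dist a b)
    (h2' : G.dist b m' + G.dist m' c = G.dist b c)
    (h3' : G.dist c m' + G.dist m' a = G.dist c a) : m = m' := by
  obtain ⟨n, -, hu⟩ := hG.2 a b c
  exact (hu m ⟨h1, h2, h3⟩).trans (hu m' ⟨h1', h2', h3'⟩).symm

/-- "Bipartiteness": no vertex is equidistant from the two ends of an edge. -/
lemma bip (hG : MedianGraph G) {a b : V} (hab : G.Adj a b) (z : V) :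
    G.dist z a ≠ G.dist z b := by
  have hc := hG.1
  obtain ⟨m, h1, h2, h3⟩ := med hG a b z
  have hd : G.dist a b = 1 := adj_dist hab
  have e1 := dc G z a; have e2 := dc G z b; have e3 := dc G z m
  have e4 := dc G a b; have e5 := dc G a m; have e6 := dc G b m
  have : G.dist a m = 0 ∨ G.dist m b = 0 := by omega
  rcases this with h | h
  · have heq : a = m := dist0 hc h
    rw [← heq] at h2 h3
    omega
  · have heq : m = b := dist0 hc h
    rw [heq] at h1 h2 h3
    omega

lemma nbr_dist (hG : MedianGraph G) {a b : V} (hab : G.Adj a b) (z : V) :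
    G.dist z b = G.dist z a + 1 ∨ G.dist z a = G.dist z b + 1 := by
  have hc := hG.1
  have h1 : G.dist z b ≤ G.dist z a + 1 := by
    have := tri hc z a b; rw [adj_dist hab] at this; omega
  have h2 : G.dist z a ≤ G.dist z b + 1 := by
    have := tri hc z b a; rw [adj_dist hab.symm] at this; omega
  have := bip hG hab z
  omega

lemma dist_two (hG : MedianGraph G) {u v w : V} (huv : u ≠ v) (hu : G.Adj u w)
    (hv : G.Adj w v) {z : V} (hzz : G.dist z u = G.dist z v) : G.dist u v = 2 := by
  have hc := hG.1
  have hle : G.dist u v ≤ 2 := by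
    have := tri hc u w v; rw [adj_dist hu, adj_dist hv] at this; omega
  have hne0 : G.dist u v ≠ 0 := fun h => huv (dist0 hc h)
  have hne1 : G.dist u v ≠ 1 := by
    intro h
    exact bip hG (dist_eq_one_iff_adj.mp h) z hzz
  omega

/-- Quadrangle condition. -/
lemma qc (hG : MedianGraph G) {z u v w : V} (huv : u ≠ v) (hu : G.Adj u w) (hv : G.Adj v w)
    {k : ℕ} (hzu : G.dist z u = k) (hzv : G.dist z v = k) (hzw : G.dist z w = k + 1) :
    ∃ t : V, G.Adj u t ∧ G.Adj v t ∧ G.dist z t + 1 = k := by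
  have hc := hG.1
  have hduv : G.dist u v = 2 := dist_two hG huv hu hv.symm (hzu.trans hzv.symm)
  obtain ⟨m, h1, h2, h3⟩ := med hG u v z
  have e1 := dc G z u; have e2 := dc G z v; have e3 := dc G z m
  have hum : G.dist u m ≠ 0 := by
    intro h
    have heq : u = m := dist0 hc h
    rw [← heq] at h2
    have := dc G u z; have := dc G v z
    have : G.dist v u = 0 := by omega
    exact huv (dist0 hc this).symm
  have hmv : G.dist m v ≠ 0 := by
    intro h
    have heq : m = v := dist0 hc h
    rw [heq] at h3
    have : G.dist v u = 0 := by omega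
    exact huv (dist0 hc this).symm
  have hum1 : G.dist u m = 1 := by omega
  have hvm1 : G.dist v m = 1 := by have := dc G m v; omega
  exact ⟨m, dist_eq_one_iff_adj.mp hum1, dist_eq_one_iff_adj.mp hvm1, by omega⟩

/-- Opposite edges of a 4-cycle define the same halfspaces. -/
lemma square (hG : MedianGraph G) {u u' b b' : V}
    (h1 : G.Adj u u') (h2 : G.Adj u' b') (h3 : G.Adj b' b) (h4 : G.Adj b u)
    (hub' : u ≠ b') (hu'b : u' ≠ b) (p : V)
    (hp : G.dist p u < G.dist p b) : G.dist p u' < G.dist p b' := by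
  have hc := hG.1
  have hpb : G.dist p b = G.dist p u + 1 := by
    rcases nbr_dist hG h4.symm p with h | h <;> omega
  by_contra hcon
  have hpb' : G.dist p u' = G.dist p b' + 1 := by
    rcases nbr_dist hG h2 p with h | h <;> omega
  have hvals : G.dist p u' = G.dist p u + 1 ∧ G.dist p b' = G.dist p u := by
    rcases nbr_dist hG h1 p with h | h <;> rcases nbr_dist hG h3.symm p with h' | h' <;> omega
  obtain ⟨hu'd, hb'd⟩ := hvals
  have hbu' : G.dist b u' = 2 := dist_two hG (Ne.symm hu'b) h4 h1 (z := p) (by omega)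
  -- both u and b' are medians of (b, u', p)
  have e1 := dc G b u; have e2 := dc G u u'; have e3 := dc G u' p; have e4 := dc G p u
  have e5 := dc G b b'; have e6 := dc G b' u'; have e7 := dc G p b'; have e8 := dc G p b
  have hadj1 := adj_dist h1; have hadj2 := adj_dist h2; have hadj3 := adj_dist h3
  have hadj4 := adj_dist h4
  have hmed : u = b' :=
    med_unique hG (a := b) (b := u') (c := p)
      (by omega) (by omega) (by omega) (by omega) (by omega) (by omega)
  exact hub' hmed

end MedAux

namespace MedAux2
open MedAux

variable {V : Type*} {G : SimpleGraph V}

lemma nbr_dist' (hG : MedianGraph G) {a b : V} (hab : G.Adj a b) (z : V) :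
    G.dist b z = G.dist a z + 1 ∨ G.dist a z = G.dist b z + 1 := by
  have e1 := dc G a z; have e2 := dc G b z
  rcases nbr_dist hG hab z with h | h <;> omega

lemma step (hc : G.Connected) {u x : V} {n : ℕ} (h : G.dist u x = n + 1) :
    ∃ u' : V, G.Adj u u' ∧ G.dist u' x = n := by
  obtain ⟨p, hp⟩ := exists_walk_of_dist_ne_zero (show G.dist u x ≠ 0 by omega)
  rw [h] at hp
  cases p with
  | nil => simp at hp
  | @cons _ w _ h' q =>
    refine ⟨w, h', ?_⟩
    have hq : q.length = n := by simpa using hp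
    have h1 : G.dist w x ≤ n := hq ▸ dist_le q
    have h2 : G.dist u x ≤ 1 + G.dist w x := by
      have := tri hc u w x; rw [adj_dist h'] at this; omega
    omega

/-- The key Θ-class lemma: an edge `ub` "parallel" to the edge `xy` defines the same
halfspaces as `xy`. -/
lemma key (hG : MedianGraph G) {x y : V} (hxy : G.Adj x y) :
    ∀ α : ℕ, ∀ u b : V, G.Adj u b → G.dist u x = α → G.dist u y = α + 1 →
      G.dist b y = α → G.dist b x = α + 1 →
      ∀ p : V, G.dist p x < G.dist p y → G.dist p u < G.dist p b := by
  intro α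
  induction α with
  | zero =>
    intro u b _ hux huy hby hbx p hp
    have h1 : u = x := dist0 hG.1 hux
    have h2 : b = y := dist0 hG.1 hby
    rw [h1, h2]; exact hp
  | succ α ih =>
    intro u b hub hux huy hby hbx p hp
    obtain ⟨u', huu', hu'x⟩ := step hG.1 hux
    have hu'y : G.dist u' y = α + 1 := by
      have ht : G.dist u' y ≤ G.dist u' x + G.dist x y := tri hG.1 u' x y
      rw [adj_dist hxy] at ht
      rcases nbr_dist' hG huu' y with hh | hh <;> omega
    have hu'b : u' ≠ b := by
      intro heq; rw [heq] at hu'x; omega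
    have e1 := dc G u' y; have e2 := dc G b y; have e3 := dc G u y
    obtain ⟨t, hu't, hbt, hty⟩ :=
      qc hG (z := y) (w := u) hu'b huu'.symm hub.symm
        (k := α + 1) (by omega) (by omega) (by omega)
    have htyd : G.dist t y = α := by have := dc G y t; omega
    have htxd : G.dist t x = α + 1 := by
      rcases nbr_dist' hG hu't x with hh | hh <;> rcases nbr_dist' hG hbt x with hh' | hh' <;>
        omega
    have hih := ih u' t hu't hu'x hu'y htyd htxd p hp
    exact square hG (u := u') (u' := u) (b := t) (b' := b)
      huu'.symm hub hbt hu't.symm hu'b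
      (by intro heq; rw [heq] at huy; omega) p hih
  
lemma crossing (hG : MedianGraph G) {x y : V} :
    ∀ n : ℕ, ∀ u z : V, G.dist u z = n → G.dist u x < G.dist u y → G.dist z y ≤ G.dist z x →
    ∃ p q : V, G.Adj p q ∧ G.dist p x < G.dist p y ∧ G.dist q y ≤ G.dist q x ∧
      G.dist u p + (1 + G.dist q z) = G.dist u z := by
  intro n
  induction n with
  | zero =>
    intro u z h hu hz
    have : u = z := dist0 hG.1 h
    rw [this] at hu; omega
  | succ n ih =>
    intro u z h hu hz
    obtain ⟨w, huw, hwz⟩ := step hG.1 h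
    by_cases hw : G.dist w x < G.dist w y
    · obtain ⟨p, q, hpq, hpx, hqy, heq⟩ := ih w z hwz hw hz
      refine ⟨p, q, hpq, hpx, hqy, ?_⟩
      have t1 : G.dist u p ≤ 1 + G.dist w p := by
        have := tri hG.1 u w p; rw [adj_dist huw] at this; omega
      have t2 : G.dist u z ≤ G.dist u p + (1 + G.dist q z) := by
        have ha := tri hG.1 u p z
        have hb := tri hG.1 p q z
        rw [adj_dist hpq] at hb; omega
      omega
    · refine ⟨u, w, huw, hu, by omega, ?_⟩
      have : G.dist u u = 0 := by simp
      omega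

/-- Convexity of halfspaces associated to edges. -/
lemma w_convex (hG : MedianGraph G) {x y : V} (hxy : G.Adj x y) {u v z : V}
    (hu : G.dist u x < G.dist u y) (hv : G.dist v x < G.dist v y)
    (hz : G.dist u z + G.dist z v = G.dist u v) : G.dist z x < G.dist z y := by
  by_contra hcon
  push_neg at hcon
  obtain ⟨p, q, hpq, hpx, hqy, heq⟩ := crossing hG (G.dist u z) u z rfl hu hcon
  have hpxy : G.dist p y = G.dist p x + 1 := by rcases nbr_dist hG hxy p with h | h <;> omega
  have hqxy : G.dist q x = G.dist q y + 1 := by rcases nbr_dist hG hxy q with h | h <;> omega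
  have hqpx : G.dist q x = G.dist p x + 1 ∧ G.dist q y = G.dist p x := by
    rcases nbr_dist' hG hpq x with h | h <;> rcases nbr_dist' hG hpq y with h' | h' <;> omega
  have hkey := key hG hxy (G.dist p x) p q hpq rfl (by omega) (by omega) (by omega) v hv
  have t1 := tri hG.1 u p v
  have t2 := tri hG.1 q z v
  have e1 := dc G z v; have e2 := dc G v p; have e3 := dc G v q; have e4 := dc G q z
  rcases nbr_dist hG hpq v with h | h <;> omega

end MedAux2

namespace MedAux3
open MedAux MedAux2

variable {V : Type*} {G : SimpleGraph V}

lemma gated_convex (hc : G.Connected) {S : Set V} (hS : Gated G S) {a b w : V}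
    (ha : a ∈ S) (hb : b ∈ S) (hw : G.dist a w + G.dist w b = G.dist a b) : w ∈ S := by
  obtain ⟨g, hgS, hg⟩ := hS w
  have h1 := hg a ha
  have h2 := hg b hb
  have t := tri hc a g b
  have e1 := dc G w a; have e2 := dc G w b; have e3 := dc G a g; have e4 := dc G w g
  have h0 : G.dist w g = 0 := by omega
  rw [dist0 hc h0]; exact hgS

lemma convex_gated (hG : MedianGraph G) {S : Set V}
    (hconv : ∀ a ∈ S, ∀ b ∈ S, ∀ w, G.dist a w + G.dist w b = G.dist a b → w ∈ S)
    (hne : S.Nonempty) : Gated G S := by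
  intro v
  have hDne : {n | ∃ g ∈ S, G.dist v g = n}.Nonempty :=
    ⟨G.dist v hne.choose, hne.choose, hne.choose_spec, rfl⟩
  obtain ⟨g, hgS, hgd⟩ := Nat.sInf_mem hDne
  refine ⟨g, hgS, ?_⟩
  intro u hu
  obtain ⟨m, h1, h2, h3⟩ := med hG v g u
  have hmS : m ∈ S := hconv g hgS u hu m h2
  have hmin : sInf {n | ∃ g ∈ S, G.dist v g = n} ≤ G.dist v m := Nat.sInf_le ⟨m, hmS, rfl⟩
  have h0 : G.dist m g = 0 := by omega
  rw [dist0 hG.1 h0] at h3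
  have := dc G u g; have := dc G u v; have := dc G g v
  omega

/-- gate uniqueness. -/
lemma gate_unique (hc : G.Connected) {S : Set V} {v g g' : V}
    (h : IsGate G S v g) (h' : IsGate G S v g') : g = g' := by
  have h1 := h.2 g' h'.1
  have h2 := h'.2 g h.1
  have e := dc G g g'
  have h0 : G.dist g g' = 0 := by omega
  exact dist0 hc h0

section FiberFacts

variable {H : Set V} {x y : V}

lemma fiber_dist {v u : V} (hv : v ∈ fiber G H x) (hu : u ∈ H) :
    G.dist v u = G.dist v x + G.dist x u := hv.2 u hu

lemma self_mem_fiber (hx : x ∈ H) : x ∈ fiber G H x := by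
  refine ⟨hx, fun u hu => ?_⟩
  rw [SimpleGraph.dist_self, Nat.zero_add]

lemma fiber_disjoint (hc : G.Connected) {v : V} (hvx : v ∈ fiber G H x)
    (hvy : v ∈ fiber G H y) : x = y := gate_unique hc hvx hvy

/-- Fibers of gated sets are convex. -/
lemma fiber_convex (hG : MedianGraph G) (hH : Gated G H) (hx : x ∈ H) {v w z : V}
    (hv : v ∈ fiber G H x) (hw : w ∈ fiber G H x)
    (hz : G.dist v z + G.dist z w = G.dist v w) : z ∈ fiber G H x := by
  obtain ⟨g, hgH, hg⟩ := hH z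
  suffices hgx : g = x by
    rw [hgx] at hgH hg; exact ⟨hgH, hg⟩
  by_contra hne
  have hdgx : G.dist x g ≠ 0 := fun h0 => hne ((dist0 hG.1 h0).symm)
  obtain ⟨n, hn⟩ : ∃ n, G.dist x g = n + 1 := ⟨G.dist x g - 1, by omega⟩
  obtain ⟨u, hxu, hug⟩ := step hG.1 hn
  have huH : u ∈ H := gated_convex hG.1 hH hx hgH (by rw [adj_dist hxu]; omega)
  have hvW : G.dist v x < G.dist v u := by
    rw [fiber_dist hv huH, adj_dist hxu]; omega
  have hwW : G.dist w x < G.dist w u := by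
    rw [fiber_dist hw huH, adj_dist hxu]; omega
  have hzW : G.dist z x < G.dist z u := w_convex hG hxu hvW hwW hz
  have h1 := hg x hx
  have h2 := hg u huH
  have e1 := dc G g x; have e2 := dc G g u; have e3 := dc G u g
  omega

end FiberFacts

end MedAux3

namespace MedAux4
open MedAux MedAux2 MedAux3

variable {V : Type*} {G : SimpleGraph V} {H : Set V} {x y : V}

lemma fiber_nbr (hx : x ∈ H) (hy : y ∈ H) {a : V} (ha : a ∈ fiber G H x)
    (hxy : G.Adj x y) : G.dist a y = G.dist a x + 1 := by
  rw [fiber_dist ha hy, adj_dist hxy]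

lemma partner_dists (hG : MedianGraph G) (hx : x ∈ H) (hy : y ∈ H) (hxy : G.Adj x y)
    {a b : V} (ha : a ∈ fiber G H x) (hb : b ∈ fiber G H y) (hab : G.Adj a b) :
    G.dist b y = G.dist a x ∧ G.dist b x = G.dist a x + 1 := by
  have h1 : G.dist a y = G.dist a x + 1 := fiber_nbr hx hy ha hxy
  have h2 : G.dist b x = G.dist b y + 1 := fiber_nbr hy hx hb hxy.symm
  have t1 : G.dist b x ≤ 1 + G.dist a x := by
    have := tri hG.1 b a x; rw [adj_dist hab.symm] at this
    have := dc G b a; omega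
  have t2 : G.dist a y ≤ 1 + G.dist b y := by
    have := tri hG.1 a b y; rw [adj_dist hab] at this; omega
  omega

lemma partner_key1 (hG : MedianGraph G) (hx : x ∈ H) (hy : y ∈ H) (hxy : G.Adj x y)
    {a b : V} (ha : a ∈ fiber G H x) (hb : b ∈ fiber G H y) (hab : G.Adj a b)
    {p : V} (hp : G.dist p x < G.dist p y) : G.dist p b = G.dist p a + 1 := by
  obtain ⟨d1, d2⟩ := partner_dists hG hx hy hxy ha hb hab
  have hk := key hG hxy (G.dist a x) a b hab rfl (fiber_nbr hx hy ha hxy) d1 d2 p hp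
  rcases nbr_dist hG hab p with h | h <;> omega

lemma partner_key2 (hG : MedianGraph G) (hx : x ∈ H) (hy : y ∈ H) (hxy : G.Adj x y)
    {a b : V} (ha : a ∈ fiber G H x) (hb : b ∈ fiber G H y) (hab : G.Adj a b)
    {p : V} (hp : G.dist p y < G.dist p x) : G.dist p a = G.dist p b + 1 := by
  obtain ⟨d1, d2⟩ := partner_dists hG hx hy hxy ha hb hab
  have hk := key hG hxy.symm (G.dist a x) b a hab.symm d1 d2 rfl
    (fiber_nbr hx hy ha hxy) p hp
  rcases nbr_dist hG hab p with h | h <;> omega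

/-- The fiber `F(x)` is a halfspace-type set w.r.t. `x y`. -/
lemma fiber_W (hx : x ∈ H) (hy : y ∈ H) (hxy : G.Adj x y) {a : V} (ha : a ∈ fiber G H x) :
    G.dist a x < G.dist a y := by
  rw [fiber_nbr hx hy ha hxy]; omega

/-- Uniqueness of the partner of a boundary vertex. -/
lemma partner_unique (hG : MedianGraph G) (hx : x ∈ H) (hy : y ∈ H) (hxy : G.Adj x y)
    {a b b' : V} (ha : a ∈ fiber G H x) (hb : b ∈ fiber G H y) (hab : G.Adj a b)
    (hb' : b' ∈ fiber G H y) (hab' : G.Adj a b') : b = b' := by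
  have h := partner_key2 hG hx hy hxy ha hb hab (p := b') (fiber_W hy hx hxy.symm hb')
  rw [adj_dist hab'.symm] at h
  have h0 : G.dist b' b = 0 := by omega
  exact (dist0 hG.1 h0).symm

/-- Adjacent boundary vertices have adjacent partners. -/
lemma partner_adj (hG : MedianGraph G) (hx : x ∈ H) (hy : y ∈ H) (hxy : G.Adj x y)
    {a a' b b' : V} (ha : a ∈ fiber G H x) (ha' : a' ∈ fiber G H x)
    (hb : b ∈ fiber G H y) (hb' : b' ∈ fiber G H y)
    (hab : G.Adj a b) (hab' : G.Adj a' b') (haa' : G.Adj a a') : G.Adj b b' := by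
  have h1 : G.dist a' b = 2 := by
    have := partner_key1 hG hx hy hxy ha hb hab (p := a') (fiber_W hx hy hxy ha')
    rw [adj_dist haa'.symm] at this; omega
  have h2 : G.dist b b' + 1 = 2 := by
    have := partner_key2 hG hx hy hxy ha' hb' hab' (p := b) (fiber_W hy hx hxy.symm hb)
    have := dc G b a'; omega
  by_cases hbb : b = b'
  · exfalso
    rw [← hbb] at hab'
    have : a = a' := partner_unique hG hy hx hxy.symm hb ha hab.symm ha' hab'.symm
    rw [this] at haa'
    exact G.irrefl haa'
  · exact dist_eq_one_iff_adj.mp (by omega)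

/-- The boundary is convex. -/
lemma bdry_convex (hG : MedianGraph G) (hH : Gated G H) (hx : x ∈ H) (hy : y ∈ H)
    (hxy : G.Adj x y) {a a' z : V} (ha : a ∈ bdry G H x y) (ha' : a' ∈ bdry G H x y)
    (hz : G.dist a z + G.dist z a' = G.dist a a') : z ∈ bdry G H x y := by
  obtain ⟨haf, b, hbf, hab⟩ := ha
  obtain ⟨haf', b', hbf', hab'⟩ := ha'
  have hzf : z ∈ fiber G H x := fiber_convex hG hH hx haf haf' hz
  have k1 : G.dist z b = G.dist z a + 1 :=
    partner_key1 hG hx hy hxy haf hbf hab (fiber_W hx hy hxy hzf)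
  have k2 : G.dist z b' = G.dist z a' + 1 :=
    partner_key1 hG hx hy hxy haf' hbf' hab' (fiber_W hx hy hxy hzf)
  have k3 : G.dist b b' = G.dist a a' := by
    have h1 : G.dist a' b = G.dist a' a + 1 :=
      partner_key1 hG hx hy hxy haf hbf hab (fiber_W hx hy hxy haf')
    have h2 : G.dist b a' = G.dist b b' + 1 :=
      partner_key2 hG hx hy hxy haf' hbf' hab' (fiber_W hy hx hxy.symm hbf)
    have := dc G b a'; have := dc G a a'; omega
  obtain ⟨m, h1, h2, h3⟩ := med hG z b b'
  have hm1 : G.dist z m = 1 := by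
    have e1 := dc G z a; have e2 := dc G z a'; have e3 := dc G z m
    have e4 := dc G z b'; have e5 := dc G b' m; have e6 := dc G m b
    omega
  have hmf : m ∈ fiber G H y := fiber_convex hG hH hy hbf hbf' h2
  exact ⟨hzf, m, hmf, dist_eq_one_iff_adj.mp hm1⟩

lemma bdry_gated (hG : MedianGraph G) (hH : Gated G H) (hx : x ∈ H) (hy : y ∈ H)
    (hxy : G.Adj x y) (hne : (bdry G H x y).Nonempty) : Gated G (bdry G H x y) :=
  convex_gated hG (fun a haB a' haB' w hw => bdry_convex hG hH hx hy hxy haB haB' hw) hne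

lemma neighboring_adj (hG : MedianGraph G) (hx : x ∈ H) (hy : y ∈ H) (hne : x ≠ y)
    (h : Neighboring G H x y) : G.Adj x y := by
  obtain ⟨a, ha, b, hb, hab⟩ := h
  have h1 : G.dist a y = G.dist a x + G.dist x y := fiber_dist ha hy
  have h2 : G.dist b x = G.dist b y + G.dist y x := fiber_dist hb hx
  have t1 : G.dist a y ≤ 1 + G.dist b y := by
    have := tri hG.1 a b y; rw [adj_dist hab] at this; omega
  have t2 : G.dist b x ≤ 1 + G.dist a x := by
    have := tri hG.1 b a x; rw [adj_dist hab.symm] at this; have := dc G a b; have := dc G b a; omega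
  have e := dc G x y
  have hne0 : G.dist x y ≠ 0 := fun h0 => hne (dist0 hG.1 h0)
  exact dist_eq_one_iff_adj.mp (by omega)

end MedAux4

namespace MedAux5
open MedAux MedAux2 MedAux3 MedAux4

variable {d : ℕ}

def pullF (S : Finset (Fin (d + 1))) : Finset (Fin d) :=
  Finset.univ.filter fun i => i.castSucc ∈ S

lemma mem_pullF {S : Finset (Fin (d + 1))} {i : Fin d} : i ∈ pullF S ↔ i.castSucc ∈ S := by
  simp [pullF]

lemma pullF_symmDiff (S T : Finset (Fin (d + 1))) :
    pullF (symmDiff S T) = symmDiff (pullF S) (pullF T) := by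
  ext i
  simp only [mem_pullF, Finset.mem_symmDiff]

lemma card_pullF (S : Finset (Fin (d + 1))) :
    S.card = (pullF S).card + (if Fin.last d ∈ S then 1 else 0) := by
  have hbij : (pullF S).card = (S.erase (Fin.last d)).card := by
    apply Finset.card_bij (fun i _ => Fin.castSucc i)
    · intro i hi
      rw [Finset.mem_erase]
      exact ⟨(Fin.castSucc_lt_last i).ne, mem_pullF.mp hi⟩
    · intro i _ j _ h
      exact Fin.castSucc_injective _ h
    · intro j hj
      rw [Finset.mem_erase] at hj
      obtain ⟨i, rfl⟩ := Fin.exists_castSucc_eq.mpr hj.1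
      exact ⟨i, mem_pullF.mpr hj.2, rfl⟩
  by_cases h : Fin.last d ∈ S
  · rw [hbij]
    have := Finset.card_erase_add_one h
    simp [h]; omega
  · simp [h, hbij, Finset.erase_eq_of_notMem h]

lemma pullF_ext {S T : Finset (Fin (d + 1))}
    (hlast : (Fin.last d ∈ S) ↔ (Fin.last d ∈ T)) (hp : pullF S = pullF T) : S = T := by
  ext j
  rcases Fin.eq_castSucc_or_eq_last j with ⟨i, rfl⟩ | rfl
  · rw [← mem_pullF, ← mem_pullF, hp]
  · exact hlast

lemma last_mem_symmDiff {S T : Finset (Fin (d + 1))} :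
    Fin.last d ∈ symmDiff S T ↔ ¬((Fin.last d ∈ S) ↔ (Fin.last d ∈ T)) := by
  rw [Finset.mem_symmDiff]; tauto

lemma card_symmDiff_split (S T : Finset (Fin (d + 1))) :
    (symmDiff S T).card = (symmDiff (pullF S) (pullF T)).card
      + (if Fin.last d ∈ symmDiff S T then 1 else 0) := by
  rw [card_pullF (symmDiff S T), pullF_symmDiff]

end MedAux5

namespace MedAux6
open MedAux MedAux2 MedAux3 MedAux4 MedAux5

variable {V : Type*} {G : SimpleGraph V} {H : Set V} {x y : V}

lemma bdry_no_cube (hG : MedianGraph G) (hx : x ∈ H) (hy : y ∈ H)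
    (hxy : G.Adj x y) {d : ℕ} (hmax : ∀ d' : ℕ, HasInducedCube G d' → d' ≤ d) :
    ¬ HasCubeIn G d (bdry G H x y) := by
  rintro ⟨f, hfinj, hfS, hfadj⟩
  have hfib : ∀ A, f A ∈ fiber G H x := fun A => (hfS A).1
  have hex : ∀ A, ∃ b, b ∈ fiber G H y ∧ G.Adj (f A) b := fun A => (hfS A).2
  set bp : Finset (Fin d) → V := fun A => (hex A).choose with hbp
  have hbpf : ∀ A, bp A ∈ fiber G H y := fun A => (hex A).choose_spec.1
  have hbpa : ∀ A, G.Adj (f A) (bp A) := fun A => (hex A).choose_spec.2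
  have hxny : x ≠ y := hxy.ne
  have cA : ∀ A B, G.Adj (f A) (bp B) → A = B := by
    intro A B h
    have : f B = f A :=
      partner_unique hG hy hx hxy.symm (hbpf B) (hfib B) (hbpa B).symm (hfib A) h.symm
    exact (hfinj this).symm
  have cne : ∀ A B, f A ≠ bp B := by
    intro A B h
    exact hxny (fiber_disjoint hG.1 (h ▸ hfib A) (hbpf B))
  have cbinj : ∀ A B, bp A = bp B → A = B := by
    intro A B h
    exact cA A B (h ▸ hbpa A)
  have cadj : ∀ A B, G.Adj (bp A) (bp B) ↔ G.Adj (f A) (f B) := by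
    intro A B
    constructor
    · intro h
      exact partner_adj hG hy hx hxy.symm (hbpf A) (hbpf B) (hfib A) (hfib B)
        (hbpa A).symm (hbpa B).symm h
    · intro h
      exact partner_adj hG hx hy hxy (hfib A) (hfib B) (hbpf A) (hbpf B)
        (hbpa A) (hbpa B) h
  have hcube : HasInducedCube G (d + 1) := by
    refine ⟨fun S => if Fin.last d ∈ S then bp (pullF S) else f (pullF S), ?_,
      fun A => Set.mem_univ _, ?_⟩
    · intro S T h
      by_cases hS : Fin.last d ∈ S <;> by_cases hT : Fin.last d ∈ T <;>
        simp only [hS, hT, if_true, if_false] at h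
      · exact pullF_ext (by tauto) (cbinj _ _ h)
      · exact absurd h.symm (cne _ _)
      · exact absurd h (cne _ _)
      · exact pullF_ext (by tauto) (hfinj h)
    · intro S T
      dsimp only
      by_cases hS : Fin.last d ∈ S <;> by_cases hT : Fin.last d ∈ T
      · rw [if_pos hS, if_pos hT, card_symmDiff_split,
          if_neg (fun hm => (last_mem_symmDiff.mp hm) (by tauto)), cadj, hfadj]
        omega
      · rw [if_pos hS, if_neg hT, card_symmDiff_split,
          if_pos (last_mem_symmDiff.mpr (by tauto))]
        constructor
        · intro h
          have heq : pullF T = pullF S := cA (pullF T) (pullF S) h.symm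
          rw [heq, symmDiff_self]
          simp
        · intro h
          have hcard : (symmDiff (pullF S) (pullF T)).card = 0 := by omega
          have heq : pullF S = pullF T := symmDiff_eq_bot.mp (by simpa using hcard)
          rw [← heq]
          exact (hbpa (pullF S)).symm
      · rw [if_neg hS, if_pos hT, card_symmDiff_split,
          if_pos (last_mem_symmDiff.mpr (by tauto))]
        constructor
        · intro h
          have heq : pullF S = pullF T := cA (pullF S) (pullF T) h
          rw [heq, symmDiff_self]
          simp
        · intro h
          have hcard : (symmDiff (pullF S) (pullF T)).card = 0 := by omega
          have heq : pullF S = pullF T := symmDiff_eq_bot.mp (by simpa using hcard)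
          rw [heq]
          exact hbpa (pullF T)
      · rw [if_neg hS, if_neg hT, card_symmDiff_split,
          if_neg (fun hm => (last_mem_symmDiff.mp hm) (by tauto)), hfadj]
        omega
  have := hmax (d + 1) hcube
  omega

end MedAux6


/-- Fibers `F(x)` and `F(y)` of a gated set `H` in a median graph of dimension `d`
are neighboring iff `x ∼ y`; moreover, the boundary `∂_y F(x)` of neighboring fibers
is gated and contains no induced `d`-dimensional hypercube. -/
theorem boundary_gated_dim {V : Type*} (G : SimpleGraph V) (hG : MedianGraph G)
    (d : ℕ) (hd : HasInducedCube G d) (hmax : ∀ d' : ℕ, HasInducedCube G d' → d' ≤ d)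
    (H : Set V) (hH : Gated G H) (x y : V) (hx : x ∈ H) (hy : y ∈ H) (hxy : x ≠ y) :
    (Neighboring G H x y ↔ G.Adj x y) ∧
    (Neighboring G H x y →
      Gated G (bdry G H x y) ∧ ¬ HasCubeIn G d (bdry G H x y)) := by
  have hiff : Neighboring G H x y ↔ G.Adj x y := by
    constructor
    · exact MedAux4.neighboring_adj hG hx hy hxy
    · intro h
      exact ⟨x, MedAux3.self_mem_fiber hx, y, MedAux3.self_mem_fiber hy, h⟩
  refine ⟨hiff, fun hnb => ?_⟩
  have hadj : G.Adj x y := hiff.mp hnb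
  have hne : (bdry G H x y).Nonempty := by
    obtain ⟨a, ha, b, hb, hab⟩ := hnb
    exact ⟨a, ha, b, hb, hab⟩
  exact ⟨MedAux4.bdry_gated hG hH hx hy hadj hne,
    MedAux6.bdry_no_cube hG hx hy hadj hmax⟩
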